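/- Let n be even and let τ be a cyclic gauge invariant tensor with n indices that is invariant under cyclic permutation of its indices. For a permutation σ of {1,…,n}, let J(σ) denote the number of pairs (σ(2i−1), σ(2i)), i = 1,…,n/2, with σ(2i−1) > σ(2i). Then Σ_{σ ∈ S_n} (−1)^{J(σ⁻¹)} τ_{σ(1) σ(2) ⋯ σ(n)} = 0. -/

import Mathlib

/-- The tuple obtained from `a` by moving the first index value `a 0` into position `k`
among the remaining (ordered) index values. -/
def insertTuple {D n : ℕ} (a : Fin n → Fin D) (k : ℕ) : Fin n → Fin D :=
  fun j =>
    if j.1 < k then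
      (if h : j.1 + 1 < n then a ⟨j.1 + 1, h⟩ else a j)
    else if j.1 = k then a ⟨0, Nat.lt_of_le_of_lt (Nat.zero_le _) j.2⟩
    else a j

/-- The number of descending pairs of `σ⁻¹`. -/
def Jcard {p m : ℕ} (hn : p + 1 = 2 * m) (σ : Equiv.Perm (Fin (p + 1))) : ℕ :=
  (Finset.univ.filter (fun i : Fin m =>
      (σ⁻¹ ⟨2 * i.1 + 1, by have := i.2; omega⟩ : Fin (p + 1))
        < σ⁻¹ ⟨2 * i.1, by have := i.2; omega⟩)).card

/-- Pointwise sign comparison under one rotation. -/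
theorem pt_lemma {p m : ℕ} (x y : Fin (p + 1)) (i i₀ : Fin m)
    (hxy : x.1 ≠ y.1) (hi0 : (i = i₀) ↔ (x.1 = p ∨ y.1 = p)) :
    (if finRotate (p + 1) x < finRotate (p + 1) y then (-1 : ℝ) else 1)
      = (if i = i₀ then -1 else 1) * (if x < y then -1 else 1) := by
  have hx2 := x.2
  have hy2 := y.2
  have hrx' : (x.1 = p ∧ (finRotate (p + 1) x).1 = 0)
      ∨ (x.1 ≠ p ∧ (finRotate (p + 1) x).1 = x.1 + 1) := by
    by_cases h : x = Fin.last p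
    · exact Or.inl ⟨by simp [h], by rw [finRotate_succ_apply, Fin.val_add_one, if_pos h]⟩
    · exact Or.inr ⟨by simpa [Fin.ext_iff] using h,
        by rw [finRotate_succ_apply, Fin.val_add_one, if_neg h]⟩
  have hry' : (y.1 = p ∧ (finRotate (p + 1) y).1 = 0)
      ∨ (y.1 ≠ p ∧ (finRotate (p + 1) y).1 = y.1 + 1) := by
    by_cases h : y = Fin.last p
    · exact Or.inl ⟨by simp [h], by rw [finRotate_succ_apply, Fin.val_add_one, if_pos h]⟩
    · exact Or.inr ⟨by simpa [Fin.ext_iff] using h,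
        by rw [finRotate_succ_apply, Fin.val_add_one, if_neg h]⟩
  have hiff : (finRotate (p + 1) x < finRotate (p + 1) y) ↔ ((i = i₀) ↔ ¬ (x < y)) := by
    rw [hi0, Fin.lt_def, Fin.lt_def]
    omega
  simp only [hiff]
  by_cases hB : i = i₀ <;> by_cases hC : x < y <;> simp [hB, hC]

/-- Rotating the word by one flips exactly one pair, hence flips the sign. -/
theorem sign_flip {p m : ℕ} (hn : p + 1 = 2 * m) (σ : Equiv.Perm (Fin (p + 1))) :
    (-1 : ℝ) ^ Jcard hn (σ * (finRotate (p + 1))⁻¹) = -(-1 : ℝ) ^ Jcard hn σ := by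
  have hzlt : (σ (Fin.last p)).1 < 2 * m := by rw [← hn]; exact (σ (Fin.last p)).2
  obtain ⟨i₀, hi₀⟩ : ∃ i₀ : Fin m, i₀.1 = (σ (Fin.last p)).1 / 2 :=
    ⟨⟨(σ (Fin.last p)).1 / 2, by omega⟩, rfl⟩
  have hxy : ∀ i : Fin m,
      ((σ⁻¹ (⟨2 * i.1 + 1, by have := i.2; omega⟩ : Fin (p + 1))).1
        ≠ (σ⁻¹ (⟨2 * i.1, by have := i.2; omega⟩ : Fin (p + 1))).1) := by
    intro i h
    have h2 := σ⁻¹.injective (Fin.ext h)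
    simp only [Fin.mk.injEq] at h2
    omega
  have hi0 : ∀ i : Fin m, (i = i₀) ↔
      ((σ⁻¹ (⟨2 * i.1 + 1, by have := i.2; omega⟩ : Fin (p + 1))).1 = p ∨
       (σ⁻¹ (⟨2 * i.1, by have := i.2; omega⟩ : Fin (p + 1))).1 = p) := by
    intro i
    have him := i.2
    have h1 : (σ⁻¹ (⟨2 * i.1 + 1, by omega⟩ : Fin (p + 1))).1 = p
        ↔ (σ (Fin.last p)).1 = 2 * i.1 + 1 := by
      rw [show ((σ⁻¹ (⟨2 * i.1 + 1, by omega⟩ : Fin (p + 1))).1 = p) ↔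
          (σ⁻¹ (⟨2 * i.1 + 1, by omega⟩ : Fin (p + 1)) = Fin.last p) by
        rw [Fin.ext_iff, Fin.val_last]]
      rw [Equiv.Perm.inv_eq_iff_eq, Fin.ext_iff]
      exact eq_comm
    have h2 : (σ⁻¹ (⟨2 * i.1, by omega⟩ : Fin (p + 1))).1 = p
        ↔ (σ (Fin.last p)).1 = 2 * i.1 := by
      rw [show ((σ⁻¹ (⟨2 * i.1, by omega⟩ : Fin (p + 1))).1 = p) ↔
          (σ⁻¹ (⟨2 * i.1, by omega⟩ : Fin (p + 1)) = Fin.last p) by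
        rw [Fin.ext_iff, Fin.val_last]]
      rw [Equiv.Perm.inv_eq_iff_eq, Fin.ext_iff]
      exact eq_comm
    rw [h1, h2, Fin.ext_iff, hi₀]
    omega
  unfold Jcard
  rw [← Finset.prod_const, Finset.prod_filter, ← Finset.prod_const, Finset.prod_filter]
  simp only [mul_inv_rev, inv_inv, Equiv.Perm.mul_apply]
  rw [Finset.prod_congr rfl (fun i _ =>
    pt_lemma (σ⁻¹ ⟨2 * i.1 + 1, by have := i.2; omega⟩)
      (σ⁻¹ ⟨2 * i.1, by have := i.2; omega⟩) i i₀ (hxy i) (hi0 i))]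
  rw [Finset.prod_mul_distrib, Finset.prod_ite_eq' Finset.univ i₀ (fun _ => (-1 : ℝ))]
  simp

/-- The signed summand. -/
def Fterm {D p m : ℕ} (hn : p + 1 = 2 * m) (τ : (Fin (p + 1) → Fin D) → ℝ)
    (a : Fin (p + 1) → Fin D) (σ : Equiv.Perm (Fin (p + 1))) : ℝ :=
  (-1 : ℝ) ^ Jcard hn σ * τ (fun k => a (σ k))

/-- Auxiliary version with `n = p + 1` exposed, proved using only cyclicity. -/
theorem stmt1_aux {D p m : ℕ} (hn : p + 1 = 2 * m)
    (τ : (Fin (p + 1) → Fin D) → ℝ)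
    (hcyc : ∀ b : Fin (p + 1) → Fin D, τ b = τ (fun j => b (finRotate (p + 1) j)))
    (a : Fin (p + 1) → Fin D) :
    ∑ σ : Equiv.Perm (Fin (p + 1)), Fterm hn τ a σ = 0 := by
  have hkey : ∀ σ : Equiv.Perm (Fin (p + 1)),
      Fterm hn τ a (σ * (finRotate (p + 1))⁻¹) = -Fterm hn τ a σ := by
    intro σ
    have hτ : τ (fun k => a ((σ * (finRotate (p + 1))⁻¹) k)) = τ (fun k => a (σ k)) := by
      have h := hcyc (fun k => a (σ ((finRotate (p + 1))⁻¹ k)))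
      simp only [Equiv.Perm.inv_def, Equiv.symm_apply_apply] at h
      simpa [Equiv.Perm.mul_apply] using h
    unfold Fterm
    rw [hτ, sign_flip hn σ]
    ring
  have h1 : ∑ σ : Equiv.Perm (Fin (p + 1)), Fterm hn τ a (σ * (finRotate (p + 1))⁻¹)
      = ∑ σ : Equiv.Perm (Fin (p + 1)), Fterm hn τ a σ :=
    Equiv.sum_comp (Equiv.mulRight (finRotate (p + 1))⁻¹) (Fterm hn τ a)
  have h2 : ∑ σ : Equiv.Perm (Fin (p + 1)), Fterm hn τ a (σ * (finRotate (p + 1))⁻¹)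
      = -∑ σ : Equiv.Perm (Fin (p + 1)), Fterm hn τ a σ := by
    simp only [hkey]
    exact Finset.sum_neg_distrib _
  linarith [h1, h2]

/-- For an even `n = 2m`, a cyclically symmetric, cyclic gauge invariant tensor `τ`
satisfies `∑_{σ ∈ S_n} (-1)^{J(σ⁻¹)} τ_{σ(1) … σ(n)} = 0`, where `J(ρ)` counts the
pairs `(ρ(2i-1), ρ(2i))` that are descending. -/
theorem stmt1 {D n m : ℕ} (hn : n = 2 * m) (hm : 0 < m)
    (τ : (Fin n → Fin D) → ℝ)
    (hcyc : ∀ a : Fin n → Fin D, τ a = τ (fun j => a (finRotate n j)))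
    (hCGI : ∀ a : Fin n → Fin D,
      ∑ k ∈ Finset.range (n - 1), τ (insertTuple a k) = 0)
    (a : Fin n → Fin D) :
    ∑ σ : Equiv.Perm (Fin n),
      (-1 : ℝ) ^ ((Finset.univ.filter (fun i : Fin m =>
            (σ⁻¹ ⟨2 * i.1 + 1, by have := i.2; omega⟩ : Fin n)
              < σ⁻¹ ⟨2 * i.1, by have := i.2; omega⟩)).card)
        * τ (fun k => a (σ k)) = 0 := by
  obtain ⟨p, rfl⟩ : ∃ p, n = p + 1 := ⟨n - 1, by omega⟩
  exact stmt1_aux hn τ hcyc a
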